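/- arXiv:2209.03931 — 5 statements merged into one kernel-verified Lean document; each statement's English description precedes it below -/
import Mathlib

section
/- If T₁ and T₂ are trees with γ_P(T₁) = γ(T₁) and γ_P(T₂) = γ(T₂), then γ_P(T₁ □ T₂) ≥ γ_P(T₁)·γ_P(T₂). -/
namespace PaperPD

open SimpleGraph

variable {V : Type} {W : Type}

/-- Observation process for power domination on a simple graph. -/
inductive Observed (G : SimpleGraph V) (S : Set V) : V → Prop
  | mem : ∀ v ∈ S, Observed G S v
  | dom : ∀ u v, u ∈ S → G.Adj u v → Observed G S v
  | prop : ∀ u v, Observed G S u → G.Adj u v →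
      (∀ w, G.Adj u w → w ≠ v → Observed G S w) → Observed G S v

/-- `S` is a power dominating set of `G`. -/
def IsPDS (G : SimpleGraph V) (S : Set V) : Prop := ∀ v, Observed G S v

/-- Power domination number. -/
noncomputable def pdNum (G : SimpleGraph V) [Fintype V] : ℕ :=
  sInf {n | ∃ S : Finset V, S.card = n ∧ IsPDS G ↑S}

/-- Zero forcing process. -/
inductive Forced (G : SimpleGraph V) (S : Set V) : V → Prop
  | mem : ∀ v ∈ S, Forced G S v
  | prop : ∀ u v, Forced G S u → G.Adj u v →
      (∀ w, G.Adj u w → w ≠ v → Forced G S w) → Forced G S v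

/-- Zero forcing number. -/
noncomputable def zNum (G : SimpleGraph V) [Fintype V] : ℕ :=
  sInf {n | ∃ S : Finset V, S.card = n ∧ ∀ v, Forced G S v}

/-- Domination number. -/
noncomputable def domNum (G : SimpleGraph V) [Fintype V] : ℕ :=
  sInf {n | ∃ S : Finset V, S.card = n ∧ ∀ v, ∃ u ∈ S, v = u ∨ G.Adj u v}

/-- No induced `K_{1,3}`. -/
def ClawFree (G : SimpleGraph V) : Prop :=
  ∀ x a b c : V, a ≠ b → a ≠ c → b ≠ c →
    G.Adj x a → G.Adj x b → G.Adj x c →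
    ¬ G.Adj a b → ¬ G.Adj a c → ¬ G.Adj b c → False

/-- No induced `K₄` minus an edge. -/
def DiamondFree (G : SimpleGraph V) : Prop :=
  ∀ a b c d : V, a ≠ b → a ≠ c → a ≠ d → b ≠ c → b ≠ d → c ≠ d →
    G.Adj a b → G.Adj a c → G.Adj b c → G.Adj b d → G.Adj c d →
    ¬ G.Adj a d → False

/-- A leaf: a vertex with exactly one neighbor. -/
def IsLeaf (G : SimpleGraph V) (v : V) : Prop := ∃! u, G.Adj v u

/-- A strong support vertex: adjacent to at least two leaves. -/
def IsStrongSupport (G : SimpleGraph V) (x : V) : Prop :=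
  ∃ a b, a ≠ b ∧ G.Adj x a ∧ G.Adj x b ∧ IsLeaf G a ∧ IsLeaf G b

/-- Number of strong support vertices. -/
noncomputable def ssCount (G : SimpleGraph V) : ℕ :=
  Nat.card {v // IsStrongSupport G v}

/-- Connected with no bridges. -/
def TwoEdgeConnected (G : SimpleGraph V) : Prop :=
  G.Connected ∧ ∀ e, ¬ G.IsBridge e

/-- A loopless multigraph, given by symmetric edge multiplicities. -/
structure Multigraph (W : Type) where
  mult : W → W → ℕ
  symm : ∀ u v, mult u v = mult v u
  loopless : ∀ v, mult v v = 0

/-- Underlying simple graph of a multigraph. -/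
def Multigraph.toSimple (M : Multigraph W) : SimpleGraph W where
  Adj u v := u ≠ v ∧ 0 < M.mult u v
  symm := ⟨by intro u v h; exact ⟨h.1.symm, by rw [M.symm]; exact h.2⟩⟩
  loopless := ⟨by intro v h; exact h.1 rfl⟩

/-- Degree of a vertex in a multigraph (counting multiplicities). -/
def Multigraph.degree [Fintype W] (M : Multigraph W) (v : W) : ℕ :=
  ∑ u, M.mult v u

/-- Bridgeless multigraph: no single edge is a cut edge (a parallel edge
is never a bridge). -/
def Multigraph.Bridgeless (M : Multigraph W) : Prop :=
  ∀ u v, M.mult u v = 1 → ¬ M.toSimple.IsBridge s(u, v)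

/-- A 2-factor of a multigraph, given by sub-multiplicities. -/
def Multigraph.IsTwoFactor [Fintype W] (M : Multigraph W) (f : W → W → ℕ) : Prop :=
  (∀ u v, f u v ≤ M.mult u v) ∧ (∀ u v, f u v = f v u) ∧ (∀ v, ∑ u, f v u = 2)

/-- Observation process for power domination on a multigraph: propagation
only happens along single edges. -/
inductive MObserved (M : Multigraph W) (S : Set W) : W → Prop
  | mem : ∀ v ∈ S, MObserved M S v
  | dom : ∀ u v, u ∈ S → 0 < M.mult u v → MObserved M S v
  | prop : ∀ u v, MObserved M S u → M.mult u v = 1 →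
      (∀ w, 0 < M.mult u w → w ≠ v → MObserved M S w) → MObserved M S v

/-- Power domination number of a multigraph. -/
noncomputable def mpdNum (M : Multigraph W) [Fintype W] : ℕ :=
  sInf {n | ∃ S : Finset W, S.card = n ∧ ∀ v, MObserved M ↑S v}


section Aux

open Finset

lemma acyclic_no_triangle {G : SimpleGraph V} (hG : G.IsAcyclic) {a b c : V}
    (h1 : G.Adj a b) (h2 : G.Adj b c) (h3 : G.Adj a c) : False := by
  have hpu := isAcyclic_iff_path_unique.mp hG
  have hab : a ≠ b := h1.ne
  have hbc : b ≠ c := h2.ne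
  have hac : a ≠ c := h3.ne
  let w : G.Walk a c := Walk.cons h1 (Walk.cons h2 Walk.nil)
  have hw : w.IsPath := by
    simp [w, Walk.isPath_def, hab, hac, hbc]
  have := hpu ⟨w, hw⟩ (Path.singleton h3)
  have hl := congrArg Subtype.val this
  simp [w, Path.singleton] at hl
  exact hbc hl.1

lemma acyclic_no_c4 {G : SimpleGraph V} (hG : G.IsAcyclic) {a b c d : V}
    (hac : a ≠ c) (hbd : b ≠ d)
    (h1 : G.Adj a b) (h2 : G.Adj b c) (h3 : G.Adj c d) (h4 : G.Adj d a) : False := by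
  have hpu := isAcyclic_iff_path_unique.mp hG
  let w1 : G.Walk a c := Walk.cons h1 (Walk.cons h2 Walk.nil)
  let w2 : G.Walk a c := Walk.cons h4.symm (Walk.cons h3.symm Walk.nil)
  have hw1 : w1.IsPath := by simp [w1, Walk.isPath_def, h1.ne, hac, h2.ne]
  have hw2 : w2.IsPath := by simp [w2, Walk.isPath_def, h4.ne', hac, h3.ne']
  have := hpu ⟨w1, hw1⟩ ⟨w2, hw2⟩
  have hs := congrArg Subtype.val this
  simp [w1, w2] at hs
  exact hbd hs.1

lemma leaf_nbr_eq {G : SimpleGraph V} {v : V} (h : IsLeaf G v) {u w : V}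
    (h1 : G.Adj v u) (h2 : G.Adj v w) : u = w := by
  obtain ⟨z, _, hu⟩ := h
  rw [hu u h1, hu w h2]

lemma ss_not_leaf {G : SimpleGraph V} {x : V} (h : IsStrongSupport G x) :
    ¬ IsLeaf G x := by
  obtain ⟨a, b, hab, hxa, hxb, _, _⟩ := h
  intro hl
  exact hab (leaf_nbr_eq hl hxa hxb)

lemma univ_pds [Fintype V] (G : SimpleGraph V) : IsPDS G ↑(Finset.univ : Finset V) := by
  intro v
  exact Observed.mem v (by simp)

lemma pds_set_nonempty [Fintype V] (G : SimpleGraph V) :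
    {n | ∃ S : Finset V, S.card = n ∧ IsPDS G ↑S}.Nonempty :=
  ⟨(Finset.univ : Finset V).card, Finset.univ, rfl, univ_pds G⟩

lemma pdNum_le_card [Fintype V] {G : SimpleGraph V} {S : Finset V} (h : IsPDS G ↑S) :
    pdNum G ≤ S.card :=
  Nat.sInf_le ⟨S, rfl, h⟩

lemma exists_min_pds [Fintype V] (G : SimpleGraph V) :
    ∃ S : Finset V, S.card = pdNum G ∧ IsPDS G ↑S :=
  Nat.sInf_mem (pds_set_nonempty G)

lemma dom_set_nonempty [Fintype V] (G : SimpleGraph V) :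
    {n | ∃ S : Finset V, S.card = n ∧ ∀ v, ∃ u ∈ S, v = u ∨ G.Adj u v}.Nonempty :=
  ⟨(Finset.univ : Finset V).card, Finset.univ, rfl,
    fun v => ⟨v, Finset.mem_univ v, Or.inl rfl⟩⟩

lemma domNum_le_card [Fintype V] {G : SimpleGraph V} {S : Finset V}
    (h : ∀ v, ∃ u ∈ S, v = u ∨ G.Adj u v) : domNum G ≤ S.card :=
  Nat.sInf_le ⟨S, rfl, h⟩

lemma exists_min_dom [Fintype V] (G : SimpleGraph V) :
    ∃ S : Finset V, S.card = domNum G ∧ ∀ v, ∃ u ∈ S, v = u ∨ G.Adj u v :=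
  Nat.sInf_mem (dom_set_nonempty G)

lemma one_le_domNum [Fintype V] [Nonempty V] (G : SimpleGraph V) : 1 ≤ domNum G := by
  by_contra h
  push_neg at h
  interval_cases h' : domNum G
  · obtain ⟨S, hcard, hdom⟩ := exists_min_dom G
    rw [h'] at hcard
    rw [Finset.card_eq_zero] at hcard
    obtain ⟨u, hu, _⟩ := hdom (Classical.arbitrary V)
    rw [hcard] at hu
    exact absurd hu (Finset.notMem_empty u)

/-- The key "surgery" lemma: removing a non-strong-support vertex from a
dominating set of a tree (with at least 3 vertices) leaves a power dominating set. -/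
lemma erase_pds [Fintype V] [DecidableEq V] (T : SimpleGraph V) (hT : T.IsTree) (hcard : 3 ≤ Fintype.card V)
    (D : Finset V) (hD : ∀ v, ∃ u ∈ D, v = u ∨ T.Adj u v) (d : V) (hd : d ∈ D)
    (hss : ¬ IsStrongSupport T d) : IsPDS T ↑(D.erase d) := by
  classical
  have hac : T.IsAcyclic := hT.IsAcyclic
  set D' := D.erase d with hD'def
  set Nd : V → Prop := fun v => ∃ u ∈ D', v = u ∨ T.Adj u v with hNddef
  have step0 : ∀ v, Nd v → Observed T ↑D' v := by
    rintro v ⟨u, hu, h | h⟩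
    · subst h
      exact Observed.mem _ (by simpa using hu)
    · exact Observed.dom u v (by simpa using hu) h
  have hdom' : ∀ v, ¬ Nd v → v = d ∨ T.Adj d v := by
    intro v hv
    obtain ⟨u, hu, h⟩ := hD v
    by_cases hud : u = d
    · subst hud; exact h
    · exact absurd ⟨u, Finset.mem_erase.mpr ⟨hud, hu⟩, h⟩ hv
  have hq : ∀ p, T.Adj d p → ∀ q, T.Adj p q → q ≠ d → Nd q := by
    intro p hp q hpq hqd
    by_cases h : Nd q
    · exact h
    · rcases hdom' q h with rfl | hdq
      · exact absurd rfl hqd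
      · exact (acyclic_no_triangle hac hp hpq hdq).elim
  have hA : ∀ p, T.Adj d p → ¬ Nd p → ∀ q, T.Adj p q → q ≠ d → Observed T ↑D' p := by
    intro p hdp hnp q hpq hqd
    refine Observed.prop q p (step0 q (hq p hdp q hpq hqd)) hpq.symm ?_
    intro w hqw hwp
    by_cases hw : Nd w
    · exact step0 w hw
    · rcases hdom' w hw with rfl | hdw
      · exact (acyclic_no_triangle hac hdp hpq hqw.symm).elim
      · exact (acyclic_no_c4 hac (Ne.symm hqd) (Ne.symm hwp) hdp hpq hqw hdw.symm).elim
  have hB : Observed T ↑D' d := by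
    by_cases h1 : Nd d
    · exact step0 d h1
    by_cases h2 : ∃ n, T.Adj d n ∧ Nd n
    · obtain ⟨n, hdn, hn⟩ := h2
      refine Observed.prop n d (step0 n hn) hdn.symm ?_
      intro w hnw hwd
      by_cases hw : Nd w
      · exact step0 w hw
      · rcases hdom' w hw with rfl | hdw
        · exact absurd rfl hwd
        · exact (acyclic_no_triangle hac hdn hnw hdw).elim
    by_cases h3 : ∃ p, T.Adj d p ∧ ¬ Nd p ∧ ∃ q, T.Adj p q ∧ q ≠ d
    · obtain ⟨p, hdp, hnp, q, hpq, hqd⟩ := h3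
      refine Observed.prop p d (hA p hdp hnp q hpq hqd) hdp.symm ?_
      intro w hpw hwd
      by_cases hw : Nd w
      · exact step0 w hw
      · rcases hdom' w hw with rfl | hdw
        · exact absurd rfl hwd
        · exact (acyclic_no_triangle hac hdp hpw hdw).elim
    · exfalso
      push_neg at h2 h3
      have hleaf : ∀ n, T.Adj d n → IsLeaf T n := by
        intro n hdn
        exact ⟨d, hdn.symm, fun y hy => h3 n hdn (h2 n hdn) y hy⟩
      by_cases hex : ∃ n m, T.Adj d n ∧ T.Adj d m ∧ n ≠ m
      · obtain ⟨n, m, hn, hm, hnm⟩ := hex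
        exact hss ⟨n, m, hnm, hn, hm, hleaf n hn, hleaf m hm⟩
      · push_neg at hex
        by_cases hn : ∃ n, T.Adj d n
        · obtain ⟨ℓ, hℓ⟩ := hn
          have hKd : ∀ w, T.Adj d w → w = ℓ := fun w hw => hex w ℓ hw hℓ
          have hKℓ : ∀ w, T.Adj ℓ w → w = d := fun w hw => h3 ℓ hℓ (h2 ℓ hℓ) w hw
          have hwalk : ∀ (u z : V) (w : T.Walk u z), (u = d ∨ u = ℓ) → (z = d ∨ z = ℓ) := by
            intro u z w
            induction w with
            | nil => exact id
            | cons h p ih =>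
              intro hu
              apply ih
              rcases hu with rfl | rfl
              · exact Or.inr (hKd _ h)
              · exact Or.inl (hKℓ _ h)
          have hall : ∀ z : V, z = d ∨ z = ℓ := by
            intro z
            obtain ⟨w⟩ := hT.isConnected.preconnected d z
            exact hwalk d z w (Or.inl rfl)
          have hsub : (Finset.univ : Finset V) ⊆ {d, ℓ} := by
            intro z _
            rcases hall z with rfl | rfl <;> simp
          have h2' := Finset.card_le_card hsub
          rw [Finset.card_univ] at h2'
          have : ({d, ℓ} : Finset V).card ≤ 2 := by
            apply le_trans (Finset.card_insert_le d {ℓ})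
            simp
          omega
        · push_neg at hn
          have : (1 : ℕ) < Fintype.card V := by omega
          obtain ⟨z, hz⟩ := Fintype.exists_ne_of_one_lt_card this d
          obtain ⟨w⟩ := hT.isConnected.preconnected d z
          cases w with
          | nil => exact hz rfl
          | cons h p => exact hn _ h
  intro v
  by_cases hv : Nd v
  · exact step0 v hv
  rcases hdom' v hv with rfl | hdv
  · exact hB
  by_cases hq3 : ∃ q, T.Adj v q ∧ q ≠ d
  · obtain ⟨q, h, h'⟩ := hq3
    exact hA v hdv hv q h h'
  push_neg at hq3
  refine Observed.prop d v hB hdv ?_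
  intro w hdw hwv
  by_cases hw : Nd w
  · exact step0 w hw
  by_cases hw3 : ∃ q, T.Adj w q ∧ q ≠ d
  · obtain ⟨q, h, h'⟩ := hw3
    exact hA w hdw hw q h h'
  push_neg at hw3
  exact (hss ⟨v, w, Ne.symm hwv, hdv, hdw,
    ⟨d, hdv.symm, fun y hy => hq3 y hy⟩, ⟨d, hdw.symm, fun y hy => hw3 y hy⟩⟩).elim

lemma ssCount_eq [Fintype V] (T : SimpleGraph V) [DecidablePred (IsStrongSupport T)] :
    ssCount T = (Finset.univ.filter (IsStrongSupport T)).card := by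
  simp [ssCount, Nat.card_eq_fintype_card, Fintype.card_subtype]

lemma L3 [Fintype V] (T : SimpleGraph V) (hT : T.IsTree) (hcard : 3 ≤ Fintype.card V)
    (he : pdNum T = domNum T) : domNum T ≤ ssCount T := by
  classical
  by_cases hssdom : ∀ v, ∃ u, IsStrongSupport T u ∧ (v = u ∨ T.Adj u v)
  · rw [ssCount_eq]
    apply domNum_le_card
    intro v
    obtain ⟨u, hu, h⟩ := hssdom v
    exact ⟨u, by simp [hu], h⟩
  · exfalso
    push_neg at hssdom
    obtain ⟨v₀, hv₀⟩ := hssdom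
    have hne : Nonempty V := by
      rw [← Fintype.card_pos_iff]; omega
    obtain ⟨D, hDcard, hDdom⟩ := exists_min_dom T
    obtain ⟨dd, hdd, hdde⟩ := hDdom v₀
    have hdss : ¬ IsStrongSupport T dd := by
      intro h
      obtain ⟨hne', hnadj⟩ := hv₀ dd h
      rcases hdde with h' | h'
      · exact hne' h'
      · exact hnadj h'
    have hpds := erase_pds T hT hcard D hDdom dd hdd hdss
    have hle := pdNum_le_card hpds
    rw [Finset.card_erase_of_mem hdd, hDcard, he] at hle
    have h1 : 1 ≤ domNum T := one_le_domNum T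
    omega

lemma block_lemma {T₁ : SimpleGraph V} {T₂ : SimpleGraph W}
    {x a b : V} {y c d : W}
    (hab : a ≠ b) (hxa : T₁.Adj x a) (hxb : T₁.Adj x b)
    (hla : IsLeaf T₁ a) (hlb : IsLeaf T₁ b)
    (hcd : c ≠ d) (hyc : T₂.Adj y c) (hyd : T₂.Adj y d)
    (hlc : IsLeaf T₂ c) (hld : IsLeaf T₂ d)
    {S : Set (V × W)} (hS : IsPDS (T₁.boxProd T₂) S) :
    ∃ s ∈ S, (s.1 = x ∨ (T₁.Adj x s.1 ∧ IsLeaf T₁ s.1)) ∧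
      (s.2 = y ∨ (T₂.Adj y s.2 ∧ IsLeaf T₂ s.2)) := by
  have key : ∀ v, Observed (T₁.boxProd T₂) S v → (v.1 = a ∨ v.1 = b) → (v.2 = c ∨ v.2 = d) →
      ∃ s ∈ S, (s.1 = x ∨ (T₁.Adj x s.1 ∧ IsLeaf T₁ s.1)) ∧
        (s.2 = y ∨ (T₂.Adj y s.2 ∧ IsLeaf T₂ s.2)) := by
    intro v hv
    induction hv with
    | mem v hvS =>
      intro h1 h2
      refine ⟨v, hvS, ?_, ?_⟩
      · rcases h1 with h | h <;> rw [h]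
        · exact Or.inr ⟨hxa, hla⟩
        · exact Or.inr ⟨hxb, hlb⟩
      · rcases h2 with h | h <;> rw [h]
        · exact Or.inr ⟨hyc, hlc⟩
        · exact Or.inr ⟨hyd, hld⟩
    | dom u v huS hadj =>
      intro h1 h2
      refine ⟨u, huS, ?_, ?_⟩
      · rcases hadj with ⟨ha, he⟩ | ⟨ha, he⟩
        · left
          rcases h1 with h | h
          · rw [h] at ha; exact leaf_nbr_eq hla ha.symm hxa.symm
          · rw [h] at ha; exact leaf_nbr_eq hlb ha.symm hxb.symm
        · rw [he]
          rcases h1 with h | h <;> rw [h]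
          · exact Or.inr ⟨hxa, hla⟩
          · exact Or.inr ⟨hxb, hlb⟩
      · rcases hadj with ⟨ha, he⟩ | ⟨ha, he⟩
        · rw [he]
          rcases h2 with h | h <;> rw [h]
          · exact Or.inr ⟨hyc, hlc⟩
          · exact Or.inr ⟨hyd, hld⟩
        · left
          rcases h2 with h | h
          · rw [h] at ha; exact leaf_nbr_eq hlc ha.symm hyc.symm
          · rw [h] at ha; exact leaf_nbr_eq hld ha.symm hyd.symm
    | prop u v hu hadj hall ih ih2 =>
      intro h1 h2
      rcases hadj with ⟨ha, he⟩ | ⟨ha, he⟩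
      · -- u.1 adjacent to the leaf v.1, so u.1 = x ; use the sibling leaf
        have hu1 : u.1 = x := by
          rcases h1 with h | h
          · rw [h] at ha; exact leaf_nbr_eq hla ha.symm hxa.symm
          · rw [h] at ha; exact leaf_nbr_eq hlb ha.symm hxb.symm
        rcases h1 with h | h
        · refine ih2 (b, v.2) (Or.inl ⟨by rw [hu1]; exact hxb, he⟩) ?_ (Or.inr rfl) h2
          intro hE
          rw [← hE] at h
          exact hab (h.symm)
        · refine ih2 (a, v.2) (Or.inl ⟨by rw [hu1]; exact hxa, he⟩) ?_ (Or.inl rfl) h2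
          intro hE
          rw [← hE] at h
          exact hab h
      · have hu2 : u.2 = y := by
          rcases h2 with h | h
          · rw [h] at ha; exact leaf_nbr_eq hlc ha.symm hyc.symm
          · rw [h] at ha; exact leaf_nbr_eq hld ha.symm hyd.symm
        rcases h2 with h | h
        · refine ih2 (v.1, d) (Or.inr ⟨by rw [hu2]; exact hyd, he⟩) ?_ h1 (Or.inr rfl) 
          intro hE
          rw [← hE] at h
          exact hcd (h.symm)
        · refine ih2 (v.1, c) (Or.inr ⟨by rw [hu2]; exact hyc, he⟩) ?_ h1 (Or.inl rfl)
          intro hE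
          rw [← hE] at h
          exact hcd h
  exact key (a, c) (hS (a, c)) (Or.inl rfl) (Or.inl rfl)

lemma count_lemma [Fintype V] [Fintype W] (T₁ : SimpleGraph V) (T₂ : SimpleGraph W)
    (S : Finset (V × W)) (hS : IsPDS (T₁.boxProd T₂) ↑S) :
    ssCount T₁ * ssCount T₂ ≤ S.card := by
  classical
  have hchoose : ∀ p : V × W, IsStrongSupport T₁ p.1 → IsStrongSupport T₂ p.2 →
      ∃ s, s ∈ S ∧ (s.1 = p.1 ∨ (T₁.Adj p.1 s.1 ∧ IsLeaf T₁ s.1)) ∧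
        (s.2 = p.2 ∨ (T₂.Adj p.2 s.2 ∧ IsLeaf T₂ s.2)) := by
    rintro ⟨x, y⟩ ⟨a, b, hab, hxa, hxb, hla, hlb⟩ ⟨c, d', hcd, hyc, hyd, hlc, hld⟩
    obtain ⟨s, hs1, hs2⟩ := block_lemma hab hxa hxb hla hlb hcd hyc hyd hlc hld hS
    exact ⟨s, by simpa using hs1, hs2⟩
  choose! f hf using hchoose
  have hP1 : ∀ {x x' : V}, IsStrongSupport T₁ x → IsStrongSupport T₁ x' → ∀ {v : V},
      (v = x ∨ (T₁.Adj x v ∧ IsLeaf T₁ v)) → (v = x' ∨ (T₁.Adj x' v ∧ IsLeaf T₁ v)) →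
      x = x' := by
    intro x x' hx hx' v h h'
    rcases h with rfl | ⟨hadj, hl⟩
    · rcases h' with h' | ⟨hadj', hl'⟩
      · exact h'
      · exact absurd hl' (ss_not_leaf hx)
    · rcases h' with rfl | ⟨hadj', hl'⟩
      · exact absurd hl (ss_not_leaf hx')
      · exact leaf_nbr_eq hl hadj.symm hadj'.symm
  have hP2 : ∀ {y y' : W}, IsStrongSupport T₂ y → IsStrongSupport T₂ y' → ∀ {v : W},
      (v = y ∨ (T₂.Adj y v ∧ IsLeaf T₂ v)) → (v = y' ∨ (T₂.Adj y' v ∧ IsLeaf T₂ v)) →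
      y = y' := by
    intro y y' hy hy' v h h'
    rcases h with rfl | ⟨hadj, hl⟩
    · rcases h' with h' | ⟨hadj', hl'⟩
      · exact h'
      · exact absurd hl' (ss_not_leaf hy)
    · rcases h' with rfl | ⟨hadj', hl'⟩
      · exact absurd hl (ss_not_leaf hy')
      · exact leaf_nbr_eq hl hadj.symm hadj'.symm
  set A : Finset (V × W) :=
    (Finset.univ.filter (IsStrongSupport T₁)) ×ˢ (Finset.univ.filter (IsStrongSupport T₂))
    with hAdef
  have hAmem : ∀ p ∈ A, IsStrongSupport T₁ p.1 ∧ IsStrongSupport T₂ p.2 := by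
    intro p hp
    rw [hAdef, Finset.mem_product] at hp
    constructor
    · have := hp.1; simpa using this
    · have := hp.2; simpa using this
  have hcard : A.card ≤ S.card := by
    apply Finset.card_le_card_of_injOn f
    · intro p hp
      obtain ⟨h1, h2⟩ := hAmem p hp
      exact (hf p h1 h2).1
    · intro p hp p' hp' hE
      obtain ⟨h1, h2⟩ := hAmem p hp
      obtain ⟨h1', h2'⟩ := hAmem p' hp'
      obtain ⟨_, hb1, hb2⟩ := hf p h1 h2
      obtain ⟨_, hb1', hb2'⟩ := hf p' h1' h2'
      rw [hE] at hb1 hb2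
      exact Prod.ext (hP1 h1 h1' hb1 hb1') (hP2 h2 h2' hb2 hb2')
  calc ssCount T₁ * ssCount T₂ = A.card := by
        rw [hAdef, Finset.card_product, ssCount_eq T₁, ssCount_eq T₂]
    _ ≤ S.card := hcard

lemma proj_snd [Nonempty V] {T₁ : SimpleGraph V} {T₂ : SimpleGraph W}
    {S : Finset (V × W)} [DecidableEq W] (hS : IsPDS (T₁.boxProd T₂) ↑S) :
    IsPDS T₂ ↑(S.image Prod.snd) := by
  have himg : ∀ v : V × W, v ∈ (↑S : Set (V × W)) → v.2 ∈ (↑(S.image Prod.snd) : Set W) := by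
    intro v hv
    simp only [Finset.coe_image, Set.mem_image, Finset.mem_coe] at *
    exact ⟨v, hv, rfl⟩
  have key : ∀ p, Observed (T₁.boxProd T₂) ↑S p → Observed T₂ ↑(S.image Prod.snd) p.2 := by
    intro p hp
    induction hp with
    | mem v hv =>
      exact Observed.mem _ (himg v hv)
    | dom u v huS hadj =>
      rcases hadj with ⟨ha, he⟩ | ⟨ha, he⟩
      · rw [← he]
        exact Observed.mem _ (himg u huS)
      · exact Observed.dom u.2 v.2 (himg u huS) ha
    | prop u v hu hadj hall ih ih2 =>
      rcases hadj with ⟨ha, he⟩ | ⟨ha, he⟩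
      · rw [← he]; exact ih
      · refine Observed.prop u.2 v.2 ih ha ?_
        intro w hw hwv
        have hne : (u.1, w) ≠ v := by
          intro hE
          apply hwv
          rw [← hE]
        exact ih2 (u.1, w) (Or.inr ⟨hw, rfl⟩) hne
  intro z
  obtain ⟨x₀⟩ := (inferInstance : Nonempty V)
  exact key (x₀, z) (hS (x₀, z))

lemma proj_fst [Nonempty W] {T₁ : SimpleGraph V} {T₂ : SimpleGraph W}
    {S : Finset (V × W)} [DecidableEq V] (hS : IsPDS (T₁.boxProd T₂) ↑S) :
    IsPDS T₁ ↑(S.image Prod.fst) := by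
  have himg : ∀ v : V × W, v ∈ (↑S : Set (V × W)) → v.1 ∈ (↑(S.image Prod.fst) : Set V) := by
    intro v hv
    simp only [Finset.coe_image, Set.mem_image, Finset.mem_coe] at *
    exact ⟨v, hv, rfl⟩
  have key : ∀ p, Observed (T₁.boxProd T₂) ↑S p → Observed T₁ ↑(S.image Prod.fst) p.1 := by
    intro p hp
    induction hp with
    | mem v hv =>
      exact Observed.mem _ (himg v hv)
    | dom u v huS hadj =>
      rcases hadj with ⟨ha, he⟩ | ⟨ha, he⟩
      · exact Observed.dom u.1 v.1 (himg u huS) ha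
      · rw [← he]
        exact Observed.mem _ (himg u huS)
    | prop u v hu hadj hall ih ih2 =>
      rcases hadj with ⟨ha, he⟩ | ⟨ha, he⟩
      · refine Observed.prop u.1 v.1 ih ha ?_
        intro w hw hwv
        have hne : (w, u.2) ≠ v := by
          intro hE
          apply hwv
          rw [← hE]
        exact ih2 (w, u.2) (Or.inl ⟨hw, rfl⟩) hne
      · rw [← he]; exact ih
  intro z
  obtain ⟨y₀⟩ := (inferInstance : Nonempty W)
  exact key (z, y₀) (hS (z, y₀))

lemma domNum_eq_one [Fintype V] (T : SimpleGraph V) (hc : T.Connected)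
    (hcard : Fintype.card V ≤ 2) : domNum T = 1 := by
  have hne : Nonempty V := hc.nonempty
  obtain ⟨v₀⟩ := hne
  have hdom : ∀ v : V, v = v₀ ∨ T.Adj v₀ v := by
    intro v
    by_cases h : v = v₀
    · exact Or.inl h
    · right
      obtain ⟨w⟩ := hc.preconnected v₀ v
      cases w with
      | nil => exact absurd rfl (Ne.symm h)
      | @cons _ xx _ hadj p =>
        by_cases hxv : xx = v
        · rw [← hxv]; exact hadj
        · exfalso
          have h3 : 3 ≤ Fintype.card V := by
            have := Fintype.two_lt_card_iff.mpr ⟨v₀, xx, v, hadj.ne, Ne.symm h, fun hE => hxv hE⟩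
            omega
          omega
  have hle : domNum T ≤ 1 := by
    have := domNum_le_card (G := T) (S := {v₀}) (fun v => ⟨v₀, Finset.mem_singleton_self v₀, hdom v⟩)
    simpa using this
  have hge : 1 ≤ domNum T := @one_le_domNum _ _ ⟨v₀⟩ T
  omega

end Aux

theorem stmt8 {V W : Type} [Fintype V] [Fintype W]
    (T₁ : SimpleGraph V) (T₂ : SimpleGraph W)
    (h₁ : T₁.IsTree) (h₂ : T₂.IsTree)
    (he₁ : pdNum T₁ = domNum T₁) (he₂ : pdNum T₂ = domNum T₂) :
    pdNum T₁ * pdNum T₂ ≤ pdNum (T₁.boxProd T₂) := by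
  classical
  have hne1 : Nonempty V := h₁.isConnected.nonempty
  have hne2 : Nonempty W := h₂.isConnected.nonempty
  by_cases hV : Fintype.card V ≤ 2
  · have h1 : pdNum T₁ = 1 := by rw [he₁]; exact domNum_eq_one T₁ h₁.isConnected hV
    rw [h1, one_mul]
    obtain ⟨S, hcard, hS⟩ := exists_min_pds (T₁.boxProd T₂)
    calc pdNum T₂ ≤ (S.image Prod.snd).card := pdNum_le_card (proj_snd hS)
      _ ≤ S.card := Finset.card_image_le
      _ = pdNum (T₁.boxProd T₂) := hcard
  by_cases hW : Fintype.card W ≤ 2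
  · have h1 : pdNum T₂ = 1 := by rw [he₂]; exact domNum_eq_one T₂ h₂.isConnected hW
    rw [h1, mul_one]
    obtain ⟨S, hcard, hS⟩ := exists_min_pds (T₁.boxProd T₂)
    calc pdNum T₁ ≤ (S.image Prod.fst).card := pdNum_le_card (proj_fst hS)
      _ ≤ S.card := Finset.card_image_le
      _ = pdNum (T₁.boxProd T₂) := hcard
  push_neg at hV hW
  have k1 : domNum T₁ ≤ ssCount T₁ := L3 T₁ h₁ (by omega) he₁
  have k2 : domNum T₂ ≤ ssCount T₂ := L3 T₂ h₂ (by omega) he₂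
  obtain ⟨S, hcard, hS⟩ := exists_min_pds (T₁.boxProd T₂)
  rw [he₁, he₂, ← hcard]
  exact le_trans (Nat.mul_le_mul k1 k2) (count_lemma T₁ T₂ S hS)


end PaperPD
end

section
/- For any connected graphs G and H, v_s(G)·v_s(H) ≤ Z(G □ H), where Z denotes the zero forcing number. -/
namespace PaperPD

open SimpleGraph

variable {V : Type} {W : Type}

lemma leaf_nbr {V : Type} {G : SimpleGraph V} {p x u : V} (hl : IsLeaf G p)
    (h1 : G.Adj x p) (h2 : G.Adj u p) : u = x := by
  obtain ⟨z, _, hu⟩ := hl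
  exact (hu u h2.symm).trans (hu x h1.symm).symm

lemma corner_forced {V W : Type} (G : SimpleGraph V) (H : SimpleGraph W)
    {x a b : V} {y c d : W}
    (hab : a ≠ b) (hxa : G.Adj x a) (hxb : G.Adj x b)
    (hla : IsLeaf G a) (hlb : IsLeaf G b)
    (hcd : c ≠ d) (hyc : H.Adj y c) (hyd : H.Adj y d)
    (hlc : IsLeaf H c) (hld : IsLeaf H d)
    (S : Set (V × W)) {v : V × W} (hv : Forced (G.boxProd H) S v) :
    (v.1 = a ∨ v.1 = b) → (v.2 = c ∨ v.2 = d) →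
    ∃ p q, (p = a ∨ p = b) ∧ (q = c ∨ q = d) ∧ (p, q) ∈ S := by
  induction hv with
  | mem v hvS =>
    intro h1 h2
    exact ⟨v.1, v.2, h1, h2, by simpa using hvS⟩
  | prop u v hu hadj hside ihu ihs =>
    intro h1 h2
    rcases SimpleGraph.boxProd_adj.mp hadj with ⟨hG1, he⟩ | ⟨hH1, he⟩
    · -- determine u.1 = x
      have hu1 : u.1 = x := by
        rcases h1 with h | h
        · exact leaf_nbr hla hxa (h ▸ hG1)
        · exact leaf_nbr hlb hxb (h ▸ hG1)
      obtain ⟨p', hp'mem, hp'ne, hxp'⟩ :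
          ∃ p', (p' = a ∨ p' = b) ∧ p' ≠ v.1 ∧ G.Adj x p' := by
        rcases h1 with h | h
        · exact ⟨b, Or.inr rfl, by rw [h]; exact hab.symm, hxb⟩
        · exact ⟨a, Or.inl rfl, by rw [h]; exact hab, hxa⟩
      have hadj' : (G.boxProd H).Adj u (p', v.2) :=
        SimpleGraph.boxProd_adj.mpr (Or.inl ⟨by rw [hu1]; exact hxp', he⟩)
      have hne : (p', v.2) ≠ v := fun hh => hp'ne (congrArg Prod.fst hh)
      exact ihs (p', v.2) hadj' hne hp'mem h2
    · have hu2 : u.2 = y := by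
        rcases h2 with h | h
        · exact leaf_nbr hlc hyc (h ▸ hH1)
        · exact leaf_nbr hld hyd (h ▸ hH1)
      obtain ⟨q', hq'mem, hq'ne, hyq'⟩ :
          ∃ q', (q' = c ∨ q' = d) ∧ q' ≠ v.2 ∧ H.Adj y q' := by
        rcases h2 with h | h
        · exact ⟨d, Or.inr rfl, by rw [h]; exact hcd.symm, hyd⟩
        · exact ⟨c, Or.inl rfl, by rw [h]; exact hcd, hyc⟩
      have hadj' : (G.boxProd H).Adj u (v.1, q') :=
        SimpleGraph.boxProd_adj.mpr (Or.inr ⟨by rw [hu2]; exact hyq', he⟩)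
      have hne : (v.1, q') ≠ v := fun hh => hq'ne (congrArg Prod.snd hh)
      exact ihs (v.1, q') hadj' hne h1 hq'mem

theorem stmt12 {V W : Type} [Fintype V] [Fintype W]
    (G : SimpleGraph V) (H : SimpleGraph W)
    (hG : G.Connected) (hH : H.Connected) :
    ssCount G * ssCount H ≤ zNum (G.boxProd H) := by
  classical
  have hne : {n | ∃ S : Finset (V × W), S.card = n ∧
      ∀ v, Forced (G.boxProd H) ↑S v}.Nonempty :=
    ⟨Finset.univ.card, Finset.univ, rfl, fun v => Forced.mem v (by simp)⟩
  obtain ⟨S, hScard, hforce⟩ := Nat.sInf_mem hne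
  have key : ∀ (x : V) (y : W), IsStrongSupport G x → IsStrongSupport H y →
      ∃ pq : V × W, pq ∈ S ∧ IsLeaf G pq.1 ∧ G.Adj x pq.1 ∧
        IsLeaf H pq.2 ∧ H.Adj y pq.2 := by
    rintro x y ⟨a, b, hab, hxa, hxb, hla, hlb⟩ ⟨c, d, hcd, hyc, hyd, hlc, hld⟩
    obtain ⟨p, q, hp, hq, hpqS⟩ :=
      corner_forced G H hab hxa hxb hla hlb hcd hyc hyd hlc hld ↑S
        (hforce (a, c)) (Or.inl rfl) (Or.inl rfl)
    refine ⟨(p, q), by simpa using hpqS, ?_, ?_, ?_, ?_⟩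
    · rcases hp with rfl | rfl <;> assumption
    · rcases hp with rfl | rfl <;> assumption
    · rcases hq with rfl | rfl <;> assumption
    · rcases hq with rfl | rfl <;> assumption
  let F : {v // IsStrongSupport G v} × {w // IsStrongSupport H w} → {u // u ∈ S} :=
    fun z => ⟨(key z.1.1 z.2.1 z.1.2 z.2.2).choose,
      (key z.1.1 z.2.1 z.1.2 z.2.2).choose_spec.1⟩
  have hinj : Function.Injective F := by
    intro z1 z2 heq
    have spec1 := (key z1.1.1 z1.2.1 z1.1.2 z1.2.2).choose_spec
    have spec2 := (key z2.1.1 z2.2.1 z2.1.2 z2.2.2).choose_spec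
    have hval : (key z1.1.1 z1.2.1 z1.1.2 z1.2.2).choose
        = (key z2.1.1 z2.2.1 z2.1.2 z2.2.2).choose := congrArg Subtype.val heq
    have h1' := spec1.2.2.1
    rw [hval] at h1'
    have hx : z1.1.1 = z2.1.1 := leaf_nbr spec2.2.1 spec2.2.2.1 h1'
    have h2' := spec1.2.2.2.2
    rw [hval] at h2'
    have hy : z1.2.1 = z2.2.1 := leaf_nbr spec2.2.2.2.1 spec2.2.2.2.2 h2'
    exact Prod.ext (Subtype.ext hx) (Subtype.ext hy)
  calc ssCount G * ssCount H
      = Nat.card ({v // IsStrongSupport G v} × {w // IsStrongSupport H w}) :=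
        (Nat.card_prod _ _).symm
    _ ≤ Nat.card {u // u ∈ S} := Nat.card_le_card_of_injective F hinj
    _ = S.card := by simp [Nat.card_eq_fintype_card]
    _ = zNum (G.boxProd H) := hScard

end PaperPD
end

section
/- For any connected graphs G and H, γ_P(G □ H) ≤ min{γ(G)·Z(H), γ(H)·Z(G)}. -/
namespace PaperPD

open SimpleGraph

variable {V : Type} {W : Type}

lemma key_left {V W : Type} [Fintype V] [Fintype W]
    (G : SimpleGraph V) (H : SimpleGraph W)
    (D : Finset V) (hD : ∀ v, ∃ u ∈ D, v = u ∨ G.Adj u v)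
    (B : Finset W) (hB : ∀ w, Forced H ↑B w) :
    IsPDS (G.boxProd H) ↑(D ×ˢ B) := by
  have col : ∀ w, Forced H ↑B w →
      ∀ g, Observed (G.boxProd H) ↑(D ×ˢ B) (g, w) := by
    intro w hw
    induction hw with
    | mem v hv =>
      intro g
      obtain ⟨d, hd, hcase⟩ := hD g
      rcases hcase with rfl | hadj
      · exact Observed.mem _ (by simp [Finset.mem_product, hd, hv])
      · exact Observed.dom (d, v) (g, v)
          (by simp [Finset.mem_product, hd, hv]) (Or.inl ⟨hadj, rfl⟩)
    | prop u v hu hadj hforce ihu ihw =>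
      intro g
      refine Observed.prop (g, u) (g, v) (ihu g) (Or.inr ⟨hadj, rfl⟩) ?_
      rintro ⟨g', w'⟩ hadj' hne
      rcases hadj' with ⟨hGa, h2⟩ | ⟨hHa, h1⟩
      · simp only at h2
        subst h2
        exact ihu g'
      · simp only at h1
        subst h1
        have hne' : w' ≠ v := fun h => hne (by rw [h])
        exact ihw w' hHa hne' g
  intro x
  exact col x.2 (hB x.2) x.1

lemma key_right {V W : Type} [Fintype V] [Fintype W]
    (G : SimpleGraph V) (H : SimpleGraph W)
    (D : Finset W) (hD : ∀ v, ∃ u ∈ D, v = u ∨ H.Adj u v)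
    (B : Finset V) (hB : ∀ w, Forced G ↑B w) :
    IsPDS (G.boxProd H) ↑(B ×ˢ D) := by
  have col : ∀ w, Forced G ↑B w →
      ∀ g, Observed (G.boxProd H) ↑(B ×ˢ D) (w, g) := by
    intro w hw
    induction hw with
    | mem v hv =>
      intro g
      obtain ⟨d, hd, hcase⟩ := hD g
      rcases hcase with rfl | hadj
      · exact Observed.mem _ (by simp [Finset.mem_product, hd, hv])
      · exact Observed.dom (v, d) (v, g)
          (by simp [Finset.mem_product, hd, hv]) (Or.inr ⟨hadj, rfl⟩)
    | prop u v hu hadj hforce ihu ihw =>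
      intro g
      refine Observed.prop (u, g) (v, g) (ihu g) (Or.inl ⟨hadj, rfl⟩) ?_
      rintro ⟨w', g'⟩ hadj' hne
      rcases hadj' with ⟨hGa, h2⟩ | ⟨hHa, h1⟩
      · simp only at h2
        have hne' : w' ≠ v := fun h => hne (by rw [h, h2])
        subst h2
        exact ihw w' hGa hne' g
      · simp only at h1
        subst h1
        exact ihu g'
  intro x
  exact col x.1 (hB x.1) x.2

theorem stmt13 {V W : Type} [Fintype V] [Fintype W]
    (G : SimpleGraph V) (H : SimpleGraph W)
    (hG : G.Connected) (hH : H.Connected) :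
    pdNum (G.boxProd H) ≤ min (domNum G * zNum H) (domNum H * zNum G) := by
  -- extract optimal dominating and zero forcing sets
  have hDG : domNum G ∈ {n | ∃ S : Finset V, S.card = n ∧
      ∀ v, ∃ u ∈ S, v = u ∨ G.Adj u v} :=
    Nat.sInf_mem ⟨Finset.univ.card, Finset.univ, rfl,
      fun v => ⟨v, Finset.mem_univ v, Or.inl rfl⟩⟩
  have hDH : domNum H ∈ {n | ∃ S : Finset W, S.card = n ∧
      ∀ v, ∃ u ∈ S, v = u ∨ H.Adj u v} :=
    Nat.sInf_mem ⟨Finset.univ.card, Finset.univ, rfl,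
      fun v => ⟨v, Finset.mem_univ v, Or.inl rfl⟩⟩
  have hZG : zNum G ∈ {n | ∃ S : Finset V, S.card = n ∧ ∀ v, Forced G ↑S v} :=
    Nat.sInf_mem ⟨Finset.univ.card, Finset.univ, rfl,
      fun v => Forced.mem v (by simp)⟩
  have hZH : zNum H ∈ {n | ∃ S : Finset W, S.card = n ∧ ∀ v, Forced H ↑S v} :=
    Nat.sInf_mem ⟨Finset.univ.card, Finset.univ, rfl,
      fun v => Forced.mem v (by simp)⟩
  obtain ⟨D, hDcard, hDdom⟩ := hDG
  obtain ⟨D', hD'card, hD'dom⟩ := hDH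
  obtain ⟨B, hBcard, hBforce⟩ := hZG
  obtain ⟨B', hB'card, hB'force⟩ := hZH
  refine le_min ?_ ?_
  · have h1 := key_left G H D hDdom B' hB'force
    have : pdNum (G.boxProd H) ≤ (D ×ˢ B').card :=
      Nat.sInf_le ⟨D ×ˢ B', rfl, h1⟩
    rwa [Finset.card_product, hDcard, hB'card] at this
  · have h1 := key_right G H D' hD'dom B hBforce
    have : pdNum (G.boxProd H) ≤ (B ×ˢ D').card :=
      Nat.sInf_le ⟨B ×ˢ D', rfl, h1⟩
    rw [Finset.card_product, hBcard, hD'card] at this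
    rwa [mul_comm] at this

end PaperPD
end

section
/- If G and H are connected graphs with v_s(G) = γ(G) and v_s(H) = Z(H), then γ_P(G □ H) = γ(G)·Z(H). -/
namespace PaperPD

open SimpleGraph

variable {V : Type} {W : Type}

section AuxProof

variable {V : Type} {W : Type}

/-- The neighbor of a leaf is unique. -/
lemma leaf_nbr_s16 {G : SimpleGraph V} {a x z : V} (hl : IsLeaf G a)
    (hx : G.Adj a x) (hz : G.Adj a z) : z = x := by
  obtain ⟨u, _, hu⟩ := hl
  rw [hu z hz, hu x hx]

/-- A vertex with two distinct neighbors is not a leaf. -/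
lemma not_leaf {G : SimpleGraph V} {x a b : V} (hab : a ≠ b)
    (ha : G.Adj x a) (hb : G.Adj x b) : ¬ IsLeaf G x := by
  rintro ⟨u, _, hu⟩
  exact hab ((hu a ha).trans (hu b hb).symm)

/-- The triples {support, leaf₁, leaf₂} of distinct strong support vertices are disjoint. -/
lemma triple_eq {G : SimpleGraph V} {x x' a1 a2 a1' a2' c : V}
    (h12 : a1 ≠ a2) (h1 : G.Adj x a1) (h2 : G.Adj x a2)
    (l1 : IsLeaf G a1) (l2 : IsLeaf G a2)
    (h12' : a1' ≠ a2') (h1' : G.Adj x' a1') (h2' : G.Adj x' a2')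
    (l1' : IsLeaf G a1') (l2' : IsLeaf G a2')
    (hc : c = x ∨ c = a1 ∨ c = a2) (hc' : c = x' ∨ c = a1' ∨ c = a2') :
    x = x' := by
  have key : ∀ {z z1 z2 : V}, z1 ≠ z2 → G.Adj z z1 → G.Adj z z2 →
      IsLeaf G z1 → IsLeaf G z2 → (c = z ∨ c = z1 ∨ c = z2) →
      c = z ∨ (IsLeaf G c ∧ G.Adj c z) := by
    intro z z1 z2 hz hz1 hz2 hl1 hl2 hcc
    rcases hcc with rfl | rfl | rfl
    · exact Or.inl rfl
    · exact Or.inr ⟨hl1, hz1.symm⟩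
    · exact Or.inr ⟨hl2, hz2.symm⟩
  rcases key h12 h1 h2 l1 l2 hc with rfl | ⟨hl, hcx⟩
  · rcases key h12' h1' h2' l1' l2' hc' with rfl | ⟨hl, hcx⟩
    · rfl
    · exact absurd hl (not_leaf h12 h1 h2)
  · rcases key h12' h1' h2' l1' l2' hc' with rfl | ⟨hl', hcx'⟩
    · exact absurd hl (not_leaf h12' h1' h2')
    · exact (leaf_nbr_s16 hl hcx hcx').symm

/-- Corner lemma: a power dominating set of `G □ H` must meet the 3×3 block around
a pair of strong support vertices. -/
lemma corner {G : SimpleGraph V} {H : SimpleGraph W} {S : Set (V × W)}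
    {x a1 a2 : V} {y b1 b2 : W}
    (ha : a1 ≠ a2) (hx1 : G.Adj x a1) (hx2 : G.Adj x a2)
    (la1 : IsLeaf G a1) (la2 : IsLeaf G a2)
    (hb : b1 ≠ b2) (hy1 : H.Adj y b1) (hy2 : H.Adj y b2)
    (lb1 : IsLeaf H b1) (lb2 : IsLeaf H b2)
    (hT : ∀ p ∈ S, (p.1 = x ∨ p.1 = a1 ∨ p.1 = a2) →
      (p.2 = y ∨ p.2 = b1 ∨ p.2 = b2) → False)
    (hobs : Observed (G.boxProd H) S (a1, b1)) : False := by
  have main : ∀ p, Observed (G.boxProd H) S p →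
      (p.1 = a1 ∨ p.1 = a2) → (p.2 = b1 ∨ p.2 = b2) → False := by
    intro p hp
    induction hp with
    | mem v hv =>
      intro h1 h2
      exact hT v hv (Or.inr h1) (Or.inr h2)
    | dom u v hu huv =>
      intro h1 h2
      have lv1 : IsLeaf G v.1 := by rcases h1 with h | h <;> (rw [h]; assumption)
      have hxv : G.Adj x v.1 := by rcases h1 with h | h <;> (rw [h]; assumption)
      have lv2 : IsLeaf H v.2 := by rcases h2 with h | h <;> (rw [h]; assumption)
      have hyv : H.Adj y v.2 := by rcases h2 with h | h <;> (rw [h]; assumption)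
      rcases SimpleGraph.boxProd_adj.mp huv with ⟨hadj, heq⟩ | ⟨hadj, heq⟩
      · exact hT u hu (Or.inl (leaf_nbr_s16 lv1 hxv.symm hadj.symm))
          (by rw [heq]; exact Or.inr h2)
      · exact hT u hu (by rw [heq]; exact Or.inr h1)
          (Or.inl (leaf_nbr_s16 lv2 hyv.symm hadj.symm))
    | prop u v hu huv hside ihu ihside =>
      intro h1 h2
      have lv1 : IsLeaf G v.1 := by rcases h1 with h | h <;> (rw [h]; assumption)
      have hxv : G.Adj x v.1 := by rcases h1 with h | h <;> (rw [h]; assumption)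
      have lv2 : IsLeaf H v.2 := by rcases h2 with h | h <;> (rw [h]; assumption)
      have hyv : H.Adj y v.2 := by rcases h2 with h | h <;> (rw [h]; assumption)
      rcases SimpleGraph.boxProd_adj.mp huv with ⟨hadj, heq⟩ | ⟨hadj, heq⟩
      · -- u = (x, v.2); the other leaf column gives a contradiction
        have hu1 : u.1 = x := leaf_nbr_s16 lv1 hxv.symm hadj.symm
        rcases h1 with h | h
        · refine ihside (a2, v.2) ?_ ?_ (Or.inr rfl) h2
          · exact SimpleGraph.boxProd_adj.mpr (Or.inl ⟨by rw [hu1]; exact hx2, heq⟩)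
          · intro hh
            exact ha ((congrArg Prod.fst hh).trans h).symm
        · refine ihside (a1, v.2) ?_ ?_ (Or.inl rfl) h2
          · exact SimpleGraph.boxProd_adj.mpr (Or.inl ⟨by rw [hu1]; exact hx1, heq⟩)
          · intro hh
            exact ha ((congrArg Prod.fst hh).trans h)
      · have hu2 : u.2 = y := leaf_nbr_s16 lv2 hyv.symm hadj.symm
        rcases h2 with h | h
        · refine ihside (v.1, b2) ?_ ?_ h1 (Or.inr rfl)
          · exact SimpleGraph.boxProd_adj.mpr (Or.inr ⟨by rw [hu2]; exact hy2, heq⟩)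
          · intro hh
            exact hb ((congrArg Prod.snd hh).trans h).symm
        · refine ihside (v.1, b1) ?_ ?_ h1 (Or.inl rfl)
          · exact SimpleGraph.boxProd_adj.mpr (Or.inr ⟨by rw [hu2]; exact hy1, heq⟩)
          · intro hh
            exact hb ((congrArg Prod.snd hh).trans h)
  exact main (a1, b1) hobs (Or.inl rfl) (Or.inl rfl)

/-- Upper bound construction: a dominating set times a zero forcing set power dominates. -/
lemma prod_pds {G : SimpleGraph V} {H : SimpleGraph W} (D : Finset V) (B : Finset W)
    (hD : ∀ v, ∃ u ∈ D, v = u ∨ G.Adj u v) (hB : ∀ w, Forced H ↑B w) :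
    IsPDS (G.boxProd H) ↑(D ×ˢ B) := by
  have key : ∀ w, Forced H ↑B w → ∀ v, Observed (G.boxProd H) ↑(D ×ˢ B) (v, w) := by
    intro w hw
    induction hw with
    | mem b hbB =>
      intro v
      obtain ⟨d, hd, hcase⟩ := hD v
      have hbB' : b ∈ B := hbB
      rcases hcase with heq | hadj
      · subst heq
        exact Observed.mem (v, b) (by simp [hd, hbB'])
      · exact Observed.dom (d, b) (v, b) (by simp [hd, hbB'])
          (SimpleGraph.boxProd_adj.mpr (Or.inl ⟨hadj, rfl⟩))
    | prop u w hu hadj hside ihu ihside =>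
      intro v
      refine Observed.prop (v, u) (v, w) (ihu v)
        (SimpleGraph.boxProd_adj.mpr (Or.inr ⟨hadj, rfl⟩)) ?_
      rintro ⟨z1, z2⟩ hz hne
      rcases SimpleGraph.boxProd_adj.mp hz with ⟨hzadj, hzeq⟩ | ⟨hzadj, hzeq⟩
      · -- vertical neighbor (z1, u)
        have : z2 = u := hzeq.symm
        rw [this]
        exact ihu z1
      · have hz2 : z2 ≠ w := by
          rintro rfl
          exact hne (Prod.ext hzeq.symm rfl)
        have : z1 = v := hzeq.symm
        rw [this]
        exact ihside z2 hzadj hz2 v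
  intro p
  exact key p.2 (hB p.2) p.1

/-- Lower bound: any power dominating set of `G □ H` has at least
`ssCount G * ssCount H` vertices. -/
lemma lower_bound {V : Type} {W : Type} {G : SimpleGraph V} {H : SimpleGraph W}
    (S : Finset (V × W)) (hS : IsPDS (G.boxProd H) ↑S) :
    ssCount G * ssCount H ≤ S.card := by
  classical
  have hGc : ∀ x : {v // IsStrongSupport G v}, ∃ p : V × V,
      p.1 ≠ p.2 ∧ G.Adj x.1 p.1 ∧ G.Adj x.1 p.2 ∧ IsLeaf G p.1 ∧ IsLeaf G p.2 := by
    rintro ⟨x, a, b, hab, h1, h2, h3, h4⟩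
    exact ⟨(a, b), hab, h1, h2, h3, h4⟩
  choose pG hG1 hG2 hG3 hG4 hG5 using hGc
  have hHc : ∀ y : {w // IsStrongSupport H w}, ∃ p : W × W,
      p.1 ≠ p.2 ∧ H.Adj y.1 p.1 ∧ H.Adj y.1 p.2 ∧ IsLeaf H p.1 ∧ IsLeaf H p.2 := by
    rintro ⟨y, a, b, hab, h1, h2, h3, h4⟩
    exact ⟨(a, b), hab, h1, h2, h3, h4⟩
  choose pH hH1 hH2 hH3 hH4 hH5 using hHc
  have key : ∀ (x : {v // IsStrongSupport G v}) (y : {w // IsStrongSupport H w}),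
      ∃ s, s ∈ S ∧ (s.1 = x.1 ∨ s.1 = (pG x).1 ∨ s.1 = (pG x).2) ∧
        (s.2 = y.1 ∨ s.2 = (pH y).1 ∨ s.2 = (pH y).2) := by
    intro x y
    by_contra hc
    push_neg at hc
    refine corner (hG1 x) (hG2 x) (hG3 x) (hG4 x) (hG5 x)
      (hH1 y) (hH2 y) (hH3 y) (hH4 y) (hH5 y) ?_ (hS ((pG x).1, (pH y).1))
    intro p hp hA hB
    obtain ⟨n1, n2, n3⟩ := hc p hp hA
    rcases hB with h | h | h
    exacts [n1 h, n2 h, n3 h]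
  choose f hfS hf1 hf2 using key
  have inj : Function.Injective
      (fun q : {v // IsStrongSupport G v} × {w // IsStrongSupport H w} =>
        (⟨f q.1 q.2, hfS q.1 q.2⟩ : {s // s ∈ S})) := by
    rintro ⟨x, y⟩ ⟨x', y'⟩ h
    have hval : f x y = f x' y' := congrArg Subtype.val h
    have hx : x.1 = x'.1 := by
      refine triple_eq (hG1 x) (hG2 x) (hG3 x) (hG4 x) (hG5 x)
        (hG1 x') (hG2 x') (hG3 x') (hG4 x') (hG5 x') (hf1 x y) ?_
      rw [hval]; exact hf1 x' y'
    have hy : y.1 = y'.1 := by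
      refine triple_eq (hH1 y) (hH2 y) (hH3 y) (hH4 y) (hH5 y)
        (hH1 y') (hH2 y') (hH3 y') (hH4 y') (hH5 y') (hf2 x y) ?_
      rw [hval]; exact hf2 x' y'
    exact Prod.ext (Subtype.ext hx) (Subtype.ext hy)
  calc ssCount G * ssCount H
      = Nat.card ({v // IsStrongSupport G v} × {w // IsStrongSupport H w}) :=
        (Nat.card_prod _ _).symm
    _ ≤ Nat.card {s // s ∈ S} := Nat.card_le_card_of_injective _ inj
    _ = S.card := Nat.card_eq_finsetCard S

end AuxProof

theorem stmt16 {V W : Type} [Fintype V] [Fintype W]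
    (G : SimpleGraph V) (H : SimpleGraph W)
    (hG : G.Connected) (hH : H.Connected)
    (h₁ : ssCount G = domNum G) (h₂ : ssCount H = zNum H) :
    pdNum (G.boxProd H) = domNum G * zNum H := by
  classical
  have hne : {n | ∃ S : Finset (V × W), S.card = n ∧ IsPDS (G.boxProd H) ↑S}.Nonempty :=
    ⟨(Finset.univ : Finset (V × W)).card,
      ⟨Finset.univ, rfl, fun v => Observed.mem v (by simp)⟩⟩
  obtain ⟨S0, hS0card, hS0⟩ := Nat.sInf_mem hne
  have hS0card : S0.card = pdNum (G.boxProd H) := hS0card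
  have hDne : {n | ∃ S : Finset V, S.card = n ∧
      ∀ v, ∃ u ∈ S, v = u ∨ G.Adj u v}.Nonempty :=
    ⟨(Finset.univ : Finset V).card,
      ⟨Finset.univ, rfl, fun v => ⟨v, by simp, Or.inl rfl⟩⟩⟩
  obtain ⟨D, hDcard, hDdom⟩ := Nat.sInf_mem hDne
  have hDcard : D.card = domNum G := hDcard
  have hBne : {n | ∃ S : Finset W, S.card = n ∧ ∀ w, Forced H ↑S w}.Nonempty :=
    ⟨(Finset.univ : Finset W).card,
      ⟨Finset.univ, rfl, fun w => Forced.mem w (by simp)⟩⟩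
  obtain ⟨B, hBcard, hBf⟩ := Nat.sInf_mem hBne
  have hBcard : B.card = zNum H := hBcard
  have hup : pdNum (G.boxProd H) ≤ domNum G * zNum H :=
    Nat.sInf_le ⟨D ×ˢ B, by rw [Finset.card_product, hDcard, hBcard],
      prod_pds D B hDdom hBf⟩
  have hlow : domNum G * zNum H ≤ pdNum (G.boxProd H) := by
    rw [← h₁, ← h₂, ← hS0card]
    exact lower_bound S0 hS0
  exact le_antisymm hup hlow

end PaperPD
end

section
/- For any graph G and any pair of leaves ℓ₁, ℓ₂ adjacent to a common strong support vertex x, every power dominating set D of G satisfies D ∩ {x, ℓ₁, ℓ₂} ≠ ∅. -/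
namespace PaperPD

open SimpleGraph

variable {V : Type} {W : Type}

theorem stmt17 {V : Type} (G : SimpleGraph V) (x ℓ₁ ℓ₂ : V)
    (hne : ℓ₁ ≠ ℓ₂) (h₁ : G.Adj x ℓ₁) (h₂ : G.Adj x ℓ₂)
    (hl₁ : IsLeaf G ℓ₁) (hl₂ : IsLeaf G ℓ₂)
    (D : Set V) (hD : IsPDS G D) :
    (D ∩ {x, ℓ₁, ℓ₂}).Nonempty := by
  by_contra hemp
  rw [Set.not_nonempty_iff_eq_empty, Set.eq_empty_iff_forall_notMem] at hemp
  have hxD : x ∉ D := fun h => hemp x ⟨h, Or.inl rfl⟩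
  have h1D : ℓ₁ ∉ D := fun h => hemp ℓ₁ ⟨h, Or.inr (Or.inl rfl)⟩
  have h2D : ℓ₂ ∉ D := fun h => hemp ℓ₂ ⟨h, Or.inr (Or.inr rfl)⟩
  obtain ⟨u1, hu1, huniq1⟩ := hl₁
  obtain ⟨u2, hu2, huniq2⟩ := hl₂
  have hx1 : u1 = x := (huniq1 x h₁.symm).symm ▸ rfl
  have hx2 : u2 = x := (huniq2 x h₂.symm).symm ▸ rfl
  have key : ∀ v, Observed G D v → v ≠ ℓ₁ ∧ v ≠ ℓ₂ := by
    intro v hv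
    induction hv with
    | mem v hvD =>
        exact ⟨fun h => h1D (h ▸ hvD), fun h => h2D (h ▸ hvD)⟩
    | dom u v huD hadj =>
        constructor
        · rintro rfl
          exact hxD (((huniq1 u hadj.symm).trans hx1) ▸ huD)
        · rintro rfl
          exact hxD (((huniq2 u hadj.symm).trans hx2) ▸ huD)
    | prop u v hu hadj hall ih ihall =>
        constructor
        · rintro rfl
          have hux : u = x := (huniq1 u hadj.symm).trans hx1
          exact (ihall ℓ₂ (hux ▸ h₂) hne.symm).2 rfl
        · rintro rfl
          have hux : u = x := (huniq2 u hadj.symm).trans hx2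
          exact (ihall ℓ₁ (hux ▸ h₁) hne).1 rfl
  exact (key ℓ₁ (hD ℓ₁)).1 rfl

end PaperPD
end
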